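/- Let Γ be a profinite group with closed normal subgroups (Γ_ℓ)_{ℓ∈L} and continuous surjections ρ_ℓ : Γ → G_ℓ such that ρ_{ℓ'}(Γ_ℓ) = 1 whenever ℓ' ≠ ℓ. Then the image of Γ_ℓ under ρ = (ρ_ℓ) : Γ → ∏ G_ℓ is contained in the ℓ-th factor, and ρ(Γ) contains the direct product ∏_ℓ A_ℓ where A_ℓ = ρ_ℓ(Γ_ℓ). -/

import Mathlib

private lemma list_prod_eq_single {L M : Type*} [Monoid M] (f : L → M) :
    ∀ (l : List L) (ℓ' : L), l.Nodup → ℓ' ∈ l → (∀ ℓ ∈ l, ℓ ≠ ℓ' → f ℓ = 1) →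
    (l.map f).prod = f ℓ' := by
  intro l
  induction l with
  | nil => intro ℓ' _ h; exact absurd h List.not_mem_nil
  | cons a t ih =>
    intro ℓ' hnd hmem hone
    rcases List.mem_cons.mp hmem with h | h
    · subst h
      have h1 : (List.map f t).prod = 1 := List.prod_eq_one (by
        intro x hx
        obtain ⟨ℓ, hℓ, rfl⟩ := List.mem_map.mp hx
        exact hone ℓ (List.mem_cons_of_mem _ hℓ)
          (fun he => (List.nodup_cons.mp hnd).1 (he ▸ hℓ)))
      simp [h1]
    · have ha : f a = 1 := hone a List.mem_cons_self
        (fun he => (List.nodup_cons.mp hnd).1 (he ▸ h))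
      simp [ha, ih ℓ' (List.nodup_cons.mp hnd).2 h
        (fun ℓ hℓ => hone ℓ (List.mem_cons_of_mem _ hℓ))]

/-- Serre's Lemma 4 (§8.2): if `Γ_ℓ` are closed normal subgroups of `Γ` with
`ρ_{ℓ'}(Γ_ℓ) = 1` for `ℓ' ≠ ℓ`, then the image of `Γ_ℓ` under `ρ = (ρ_ℓ)` lies in the
`ℓ`-th factor, and `ρ(Γ)` contains the product `∏_ℓ A_ℓ` where `A_ℓ = ρ_ℓ(Γ_ℓ)`. -/
theorem stmt_19 {Γ : Type*} [Group Γ] [TopologicalSpace Γ] [IsTopologicalGroup Γ]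
    [CompactSpace Γ] [T2Space Γ] [TotallyDisconnectedSpace Γ]
    {L : Type*} {G : L → Type*} [∀ ℓ, Group (G ℓ)] [∀ ℓ, TopologicalSpace (G ℓ)]
    [∀ ℓ, IsTopologicalGroup (G ℓ)] [∀ ℓ, CompactSpace (G ℓ)] [∀ ℓ, T2Space (G ℓ)]
    [∀ ℓ, TotallyDisconnectedSpace (G ℓ)]
    (Γℓ : L → Subgroup Γ) (hclosed : ∀ ℓ, IsClosed (Γℓ ℓ : Set Γ))
    (hnormal : ∀ ℓ, (Γℓ ℓ).Normal)
    (ρ : ∀ ℓ, Γ →* G ℓ) (hcont : ∀ ℓ, Continuous (ρ ℓ))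
    (hsurj : ∀ ℓ, Function.Surjective (ρ ℓ))
    (htriv : ∀ ℓ ℓ' : L, ℓ' ≠ ℓ → ∀ γ ∈ Γℓ ℓ, ρ ℓ' γ = 1) :
    (∀ ℓ : L, ∀ γ ∈ Γℓ ℓ, ∀ ℓ' : L, ℓ' ≠ ℓ → Pi.monoidHom ρ γ ℓ' = 1) ∧
    Subgroup.pi Set.univ (fun ℓ => (Γℓ ℓ).map (ρ ℓ)) ≤ (Pi.monoidHom ρ).range := by
  have hρcont : Continuous (Pi.monoidHom ρ) := continuous_pi fun ℓ => hcont ℓ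
  refine ⟨fun ℓ γ hγ ℓ' hℓ' => htriv ℓ ℓ' hℓ' γ hγ, ?_⟩
  intro g hg
  -- the range of ρ is compact, hence closed
  have hclosedR : IsClosed (Set.range (Pi.monoidHom ρ)) :=
    (isCompact_range hρcont).isClosed
  have hmem : ∀ ℓ, g ℓ ∈ (Γℓ ℓ).map (ρ ℓ) := fun ℓ =>
    hg ℓ (Set.mem_univ ℓ)
  choose γf hγf hργf using fun ℓ => hmem ℓ
  -- show g is in the closure of the range
  have : g ∈ closure (Set.range (Pi.monoidHom ρ)) := by
    rw [mem_closure_iff]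
    intro U hU hgU
    obtain ⟨I, u, hu, hsub⟩ := isOpen_pi_iff.mp hU g hgU
    classical
    refine ⟨Pi.monoidHom ρ (I.toList.map γf).prod, ?_, Set.mem_range_self _⟩
    apply hsub
    intro ℓ' hℓ'
    have : Pi.monoidHom ρ (I.toList.map γf).prod ℓ' = g ℓ' := by
      show (ρ ℓ') (I.toList.map γf).prod = g ℓ'
      rw [map_list_prod, List.map_map]
      simp only [Function.comp_def]
      rw [list_prod_eq_single (fun ℓ => ρ ℓ' (γf ℓ)) I.toList ℓ' I.nodup_toList
        (Finset.mem_toList.mpr hℓ')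
        (fun ℓ _ hne => htriv ℓ ℓ' hne.symm _ (hγf ℓ))]
      exact hργf ℓ'
    rw [this]
    exact (hu ℓ' hℓ').2
  rw [hclosedR.closure_eq] at this
  exact this
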